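/- Let M = {closedBall(cᵢ, rᵢ)}ᵢ₌₁ᵐ be a finite collection of closed balls in ℝᵈ such that every pair of balls intersects: ‖cᵢ − cⱼ‖ ≤ rᵢ + rⱼ for all i, j. Then ⋂ᵢ closedBall(cᵢ, √(2d/(d+1))·rᵢ) ≠ ∅. -/

import Mathlib

open Metric EuclideanSpace Finset

set_option maxHeartbeats 2000000 in
theorem stmt_10 {d m : ℕ} (c : Fin m → EuclideanSpace ℝ (Fin d)) (r : Fin m → ℝ)
    (hr : ∀ i, 0 < r i)
    (h : ∀ i j, ‖c i - c j‖ ≤ r i + r j) :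
    (⋂ i, closedBall (c i) (Real.sqrt (2 * d / (d + 1)) * r i)).Nonempty := by
  rcases Nat.eq_zero_or_pos m with hm | hm
  · subst hm
    exact ⟨0, Set.mem_iInter.2 fun i => i.elim0⟩
  haveI : NeZero m := ⟨hm.ne'⟩
  have hm0 : (0 : Fin m) ∈ (univ : Finset (Fin m)) := mem_univ _
  have hne : (univ : Finset (Fin m)).Nonempty := ⟨0, hm0⟩
  set f : EuclideanSpace ℝ (Fin d) → ℝ := fun x => univ.sup' hne (fun i => ‖x - c i‖ / r i) with hf
  have hfc : Continuous f :=
    Continuous.finset_sup'_apply hne fun i _ =>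
      ((continuous_id.sub continuous_const).norm).div_const _
  set B := f (c 0) with hB
  have hB0 : 0 ≤ B :=
    le_trans (by simp) (Finset.le_sup' (fun i => ‖c 0 - c i‖ / r i) hm0)
  obtain ⟨x₀, hx₀K, hmin⟩ := (isCompact_closedBall (c 0) (B * r 0)).exists_isMinOn
    ⟨c 0, mem_closedBall_self (mul_nonneg hB0 (hr 0).le)⟩ hfc.continuousOn
  have hglobal : ∀ x, f x₀ ≤ f x := by
    intro x
    by_cases hx : x ∈ closedBall (c 0) (B * r 0)
    · exact hmin hx
    · have h1 : f x₀ ≤ B := hmin (mem_closedBall_self (mul_nonneg hB0 (hr 0).le))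
      have h2 : B * r 0 < dist x (c 0) := by simpa [not_le] using hx
      have h3 : B < ‖x - c 0‖ / r 0 := by
        rw [lt_div_iff₀ (hr 0)]; rwa [dist_eq_norm] at h2
      exact h1.trans (h3.trans_le (Finset.le_sup' (fun i => ‖x - c i‖ / r i) hm0)).le
  set t := f x₀ with htdef
  have hub : ∀ i, ‖x₀ - c i‖ ≤ t * r i := by
    intro i
    have := Finset.le_sup' (f := fun i => ‖x₀ - c i‖ / r i) (mem_univ i)
    rwa [div_le_iff₀ (hr i)] at this
  suffices hts : t ≤ Real.sqrt (2 * d / (d + 1)) by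
    refine ⟨x₀, Set.mem_iInter.2 fun i => ?_⟩
    rw [mem_closedBall, dist_eq_norm]
    calc ‖x₀ - c i‖ ≤ t * r i := hub i
    _ ≤ _ := mul_le_mul_of_nonneg_right hts (hr i).le
  rcases le_or_gt t 0 with ht0 | ht0
  · exact ht0.trans (Real.sqrt_nonneg _)
  rcases Nat.eq_zero_or_pos d with hd | hd
  · exfalso
    have hz : ∀ i : Fin m, ‖x₀ - c i‖ = 0 := by
      subst hd
      intro i
      simp [EuclideanSpace.norm_eq]
    have : t ≤ 0 := by
      rw [htdef, hf]
      apply Finset.sup'_le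
      intro i _
      rw [hz i, zero_div]
    exact absurd this (not_le.2 ht0)
  -- active set
  set A : Set (Fin m) := {i | ‖x₀ - c i‖ = t * r i} with hA
  have hAne : (c '' A).Nonempty := by
    obtain ⟨k, _, hk⟩ := Finset.exists_mem_eq_sup' hne (fun i => ‖x₀ - c i‖ / r i)
    refine ⟨c k, k, ?_, rfl⟩
    have : t = ‖x₀ - c k‖ / r k := hk
    show ‖x₀ - c k‖ = t * r k
    rw [this, div_mul_cancel₀ _ (hr k).ne']
  have hmem : x₀ ∈ convexHull ℝ (c '' A) := by
    by_contra hx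
    have hfin : (c '' A).Finite := (Set.finite_range c).subset (Set.image_subset_range _ _)
    have hcomp : IsCompact (convexHull ℝ (c '' A)) := hfin.isCompact_convexHull ℝ
    have hconv : Convex ℝ (convexHull ℝ (c '' A)) := convex_convexHull _ _
    obtain ⟨p, hp, hpmin⟩ := exists_norm_eq_iInf_of_complete_convex
      (hAne.mono (subset_convexHull ℝ _)) hcomp.isClosed.isComplete hconv x₀
    have hproj := (norm_eq_iInf_iff_real_inner_le_zero hconv hp).1 hpmin
    set v := p - x₀ with hv
    have hvne : v ≠ 0 := sub_ne_zero.2 fun hpx => hx (hpx ▸ hp)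
    have hv2 : 0 < ‖v‖ ^ 2 := pow_pos (norm_pos_iff.2 hvne) 2
    have hkey : ∀ y ∈ convexHull ℝ (c '' A), ‖v‖ ^ 2 ≤ (inner ℝ (y - x₀) v : ℝ) := by
      intro y hy
      have h1 : (inner ℝ (x₀ - p) (y - p) : ℝ) ≤ 0 := hproj y hy
      have e1 : y - x₀ = (y - p) + v := by rw [hv]; abel
      have e2 : (inner ℝ (y - p) v : ℝ) = - inner ℝ (x₀ - p) (y - p) := by
        rw [hv, show p - x₀ = -(x₀ - p) by abel, inner_neg_right, real_inner_comm]
      rw [e1, inner_add_left, e2, real_inner_self_eq_norm_sq]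
      linarith
    have hev : ∀ i : Fin m, ∀ᶠ s in nhdsWithin (0:ℝ) (Set.Ioi 0),
        ‖x₀ + s • v - c i‖ < t * r i := by
      intro i
      by_cases hiA : i ∈ A
      · filter_upwards [Ioo_mem_nhdsGT_of_mem (Set.mem_Ico.2 ⟨le_refl (0:ℝ), two_pos⟩)]
        intro s hs
        obtain ⟨hs1, hs2⟩ := hs
        have hci : c i ∈ convexHull ℝ (c '' A) := subset_convexHull ℝ _ ⟨i, hiA, rfl⟩
        have hin := hkey (c i) hci
        have hexp : ‖x₀ + s • v - c i‖ ^ 2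
            = ‖x₀ - c i‖ ^ 2 + 2 * (s * inner ℝ (x₀ - c i : EuclideanSpace ℝ (Fin d)) v) + s ^ 2 * ‖v‖ ^ 2 := by
          have e3 : x₀ + s • v - c i = (x₀ - c i) + s • v := by abel
          rw [e3, norm_add_sq_real, real_inner_smul_right, norm_smul]
          rw [mul_pow, Real.norm_eq_abs, sq_abs]
        have e4 : (inner ℝ (x₀ - c i : EuclideanSpace ℝ (Fin d)) v : ℝ)
            = - inner ℝ (c i - x₀ : EuclideanSpace ℝ (Fin d)) v := by
          rw [show x₀ - c i = -(c i - x₀) by abel, inner_neg_left]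
        have hAi : ‖x₀ - c i‖ = t * r i := hiA
        have htr : 0 < t * r i := mul_pos ht0 (hr i)
        refine lt_of_pow_lt_pow_left₀ 2 htr.le ?_
        rw [hexp, e4, hAi]
        have h2s : (0:ℝ) < 2 - s := by linarith
        nlinarith [mul_le_mul_of_nonneg_left hin hs1.le,
          mul_pos (mul_pos hs1 h2s) hv2]
      · have hlt : ‖x₀ - c i‖ < t * r i := lt_of_le_of_ne (hub i) hiA
        have hcont : Filter.Tendsto (fun s : ℝ => ‖x₀ + s • v - c i‖)
            (nhdsWithin 0 (Set.Ioi 0)) (nhds ‖x₀ - c i‖) := by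
          apply Filter.Tendsto.mono_left _ nhdsWithin_le_nhds
          have hc2 : Continuous fun s : ℝ => ‖x₀ + s • v - c i‖ :=
            ((continuous_const.add (continuous_id.smul continuous_const)).sub
              continuous_const).norm
          have := hc2.tendsto 0
          simpa using this
        exact hcont.eventually_lt_const hlt
    have hall : ∀ᶠ s in nhdsWithin (0:ℝ) (Set.Ioi 0),
        ∀ i, ‖x₀ + s • v - c i‖ < t * r i := Filter.eventually_all.2 hev
    obtain ⟨s, hs⟩ := hall.exists
    have hflt : f (x₀ + s • v) < t := by
      rw [hf]
      refine (Finset.sup'_lt_iff hne).2 fun i _ => ?_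
      rw [div_lt_iff₀ (hr i)]
      exact hs i
    exact absurd (hglobal (x₀ + s • v)) (not_le.2 hflt)
  obtain ⟨ι, hι, z, w, hz, haff, hw0, hw1, hwz⟩ := eq_pos_convex_span_of_mem_convexHull hmem
  haveI : DecidableEq ι := Classical.decEq ι
  haveI hιne : Nonempty ι := by
    by_contra hemp
    rw [not_nonempty_iff] at hemp
    revert hw1
    simp
  have hcard : (Fintype.card ι : ℝ) ≤ (d : ℝ) + 1 := by
    have h1 : Fintype.card ι ≤ d + 1 := by
      have h2 := haff.card_le_finrank_succ
      have h3 : Module.finrank ℝ ↥(vectorSpan ℝ (Set.range z)) ≤ d := by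
        have := Submodule.finrank_le (vectorSpan ℝ (Set.range z))
        rwa [finrank_euclideanSpace_fin] at this
      omega
    exact_mod_cast h1
  have hchoice : ∀ i : ι, ∃ k : Fin m, k ∈ A ∧ c k = z i := by
    intro i
    obtain ⟨k, hk, hck⟩ := hz (Set.mem_range_self i)
    exact ⟨k, hk, hck⟩
  choose j hjA hjc using hchoice
  set R : ι → ℝ := fun i => r (j i) with hR
  have hRpos : ∀ i, 0 < R i := fun i => hr (j i)
  have hzn : ∀ i, ‖x₀ - z i‖ = t * R i := fun i => by rw [← hjc i]; exact hjA i
  have hpair : ∀ i i', ‖z i - z i'‖ ≤ R i + R i' := fun i i' => by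
    rw [← hjc i, ← hjc i']; exact h (j i) (j i')
  have hcenter : ∑ i, w i • (z i - x₀) = (0 : EuclideanSpace ℝ (Fin d)) := by
    simp only [smul_sub]
    rw [Finset.sum_sub_distrib, hwz, ← Finset.sum_smul, hw1, one_smul, sub_self]
  set u : ι → EuclideanSpace ℝ (Fin d) := fun i => z i - x₀ with hu
  have hcross : ∑ i, ∑ i', w i * w i' * (inner ℝ (u i) (u i') : ℝ) = 0 := by
    have e : ∑ i, ∑ i', w i * w i' * (inner ℝ (u i) (u i') : ℝ)
        = (inner ℝ (∑ i, w i • u i) (∑ i', w i' • u i') : ℝ) := by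
      rw [sum_inner]
      refine Finset.sum_congr rfl fun i _ => ?_
      rw [real_inner_smul_left, inner_sum, Finset.mul_sum]
      refine Finset.sum_congr rfl fun i' _ => ?_
      rw [real_inner_smul_right]; ring
    rw [e, hcenter, inner_zero_left]
  have hid : ∑ i, ∑ i', w i * w i' * ‖z i - z i'‖ ^ 2
      = 2 * ∑ i, w i * ‖u i‖ ^ 2 := by
    have hterm : ∀ i i', w i * w i' * ‖z i - z i'‖ ^ 2
        = w i * ‖u i‖ ^ 2 * w i' + w i * (w i' * ‖u i'‖ ^ 2)
          - 2 * (w i * w i' * (inner ℝ (u i) (u i') : ℝ)) := by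
      intro i i'
      have e1 : z i - z i' = u i - u i' := by rw [hu]; beta_reduce; abel
      rw [e1, norm_sub_sq_real]
      ring
    calc ∑ i, ∑ i', w i * w i' * ‖z i - z i'‖ ^ 2
        = ∑ i, ∑ i', (w i * ‖u i‖ ^ 2 * w i' + w i * (w i' * ‖u i'‖ ^ 2)
          - 2 * (w i * w i' * (inner ℝ (u i) (u i') : ℝ))) := by
          exact Finset.sum_congr rfl fun i _ => Finset.sum_congr rfl fun i' _ => hterm i i'
      _ = ∑ i, ((w i * ‖u i‖ ^ 2) * (∑ i', w i') + w i * (∑ i', w i' * ‖u i'‖ ^ 2)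
          - 2 * ∑ i', w i * w i' * (inner ℝ (u i) (u i') : ℝ)) := by
          refine Finset.sum_congr rfl fun i _ => ?_
          rw [Finset.sum_sub_distrib, Finset.sum_add_distrib, ← Finset.mul_sum,
            ← Finset.mul_sum, ← Finset.mul_sum]
      _ = 2 * ∑ i, w i * ‖u i‖ ^ 2 := by
          simp only [hw1, mul_one]
          rw [Finset.sum_sub_distrib, Finset.sum_add_distrib, ← Finset.sum_mul,
            ← Finset.mul_sum, hcross, hw1]
          ring
  have hbound : ∑ i, ∑ i', w i * w i' * ‖z i - z i'‖ ^ 2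
      ≤ (∑ i, ∑ i', w i * w i' * (R i + R i') ^ 2) - ∑ i, w i ^ 2 * (2 * R i) ^ 2 := by
    rw [← Finset.sum_sub_distrib]
    refine Finset.sum_le_sum fun i _ => ?_
    have hsplit : ∑ i', w i * w i' * ‖z i - z i'‖ ^ 2
        = ∑ i' ∈ univ.erase i, w i * w i' * ‖z i - z i'‖ ^ 2 :=
      (Finset.sum_erase _ (by simp)).symm
    have h2 : ∑ i' ∈ univ.erase i, w i * w i' * ‖z i - z i'‖ ^ 2
        ≤ ∑ i' ∈ univ.erase i, w i * w i' * (R i + R i') ^ 2 := by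
      refine Finset.sum_le_sum fun i' _ => ?_
      have hp2 := pow_le_pow_left₀ (norm_nonneg _) (hpair i i') 2
      exact mul_le_mul_of_nonneg_left hp2 (mul_nonneg (hw0 i).le (hw0 i').le)
    have h3 : ∑ i' ∈ univ.erase i, w i * w i' * (R i + R i') ^ 2
        = (∑ i', w i * w i' * (R i + R i') ^ 2) - w i * w i * (R i + R i) ^ 2 :=
      Finset.sum_erase_eq_sub (mem_univ i)
    have h4 : w i * w i * (R i + R i) ^ 2 = w i ^ 2 * (2 * R i) ^ 2 := by ring
    rw [hsplit]
    linarith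
  have hexp2 : ∑ i, ∑ i', w i * w i' * (R i + R i') ^ 2
      = 2 * (∑ i, w i * R i ^ 2) + 2 * (∑ i, w i * R i) ^ 2 := by
    have hinner : ∀ i : ι, ∑ i', w i * w i' * (R i + R i') ^ 2
        = (w i * R i ^ 2) * (∑ i', w i') + (2 * (w i * R i)) * (∑ i', w i' * R i')
          + w i * (∑ i', w i' * R i' ^ 2) := by
      intro i
      rw [Finset.mul_sum, Finset.mul_sum, Finset.mul_sum, ← Finset.sum_add_distrib,
        ← Finset.sum_add_distrib]
      exact Finset.sum_congr rfl fun i' _ => by ring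
    simp only [hinner, hw1, mul_one]
    rw [Finset.sum_add_distrib, Finset.sum_add_distrib, ← Finset.sum_mul, ← Finset.sum_mul,
      ← Finset.mul_sum, hw1]
    ring
  have hQ0 : 0 ≤ ∑ i, w i ^ 2 * R i ^ 2 :=
    Finset.sum_nonneg fun i _ => mul_nonneg (sq_nonneg _) (sq_nonneg _)
  have hcs1 : (∑ i, w i * R i) ^ 2 ≤ ((d : ℝ) + 1) * ∑ i, w i ^ 2 * R i ^ 2 := by
    have h1 := Finset.sum_mul_sq_le_sq_mul_sq univ (fun _ => (1 : ℝ)) (fun i => w i * R i)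
    simp only [one_pow, one_mul, Finset.sum_const, nsmul_eq_mul, Finset.card_univ] at h1
    have h2 : ∀ i : ι, (w i * R i) ^ 2 = w i ^ 2 * R i ^ 2 := fun i => by ring
    simp only [h2] at h1
    rw [mul_one] at h1
    calc (∑ i, w i * R i) ^ 2 ≤ (Fintype.card ι : ℝ) * ∑ i, w i ^ 2 * R i ^ 2 := h1
      _ ≤ ((d : ℝ) + 1) * ∑ i, w i ^ 2 * R i ^ 2 := mul_le_mul_of_nonneg_right hcard hQ0
  have hcs2 : (∑ i, w i * R i) ^ 2 ≤ ∑ i, w i * R i ^ 2 := by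
    have h1 := Finset.sum_mul_sq_le_sq_mul_sq univ (fun i => Real.sqrt (w i))
      (fun i => Real.sqrt (w i) * R i)
    have e1 : ∀ i : ι, Real.sqrt (w i) * (Real.sqrt (w i) * R i) = w i * R i := fun i => by
      rw [← mul_assoc, Real.mul_self_sqrt (hw0 i).le]
    have e2 : ∀ i : ι, Real.sqrt (w i) ^ 2 = w i := fun i => Real.sq_sqrt (hw0 i).le
    have e3 : ∀ i : ι, (Real.sqrt (w i) * R i) ^ 2 = w i * R i ^ 2 := fun i => by
      rw [mul_pow, e2 i]
    simp only [e1, e2, e3, hw1, one_mul] at h1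
    exact h1
  have hS2pos : 0 < ∑ i, w i * R i ^ 2 :=
    Finset.sum_pos (fun i _ => mul_pos (hw0 i) (pow_pos (hRpos i) 2)) univ_nonempty
  have hsum : ∑ i, w i * ‖u i‖ ^ 2 = t ^ 2 * ∑ i, w i * R i ^ 2 := by
    rw [Finset.mul_sum]
    refine Finset.sum_congr rfl fun i _ => ?_
    have hui : ‖u i‖ = t * R i := by
      rw [show u i = z i - x₀ from rfl, norm_sub_rev]; exact hzn i
    rw [hui]; ring
  have hD1 : (1 : ℝ) ≤ (d : ℝ) := by exact_mod_cast hd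
  have hmain : 2 * (t ^ 2 * ∑ i, w i * R i ^ 2)
      ≤ 2 * (∑ i, w i * R i ^ 2) + 2 * (∑ i, w i * R i) ^ 2
        - 4 * ∑ i, w i ^ 2 * R i ^ 2 := by
    have e4 : ∑ i, w i ^ 2 * (2 * R i) ^ 2 = 4 * ∑ i, w i ^ 2 * R i ^ 2 := by
      rw [Finset.mul_sum]; exact Finset.sum_congr rfl fun i _ => by ring
    have h5 := hbound
    rw [hid, hsum, hexp2, e4] at h5
    linarith
  have hfin : t ^ 2 ≤ 2 * (d : ℝ) / ((d : ℝ) + 1) := by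
    rw [le_div_iff₀ (by positivity : (0 : ℝ) < (d : ℝ) + 1)]
    nlinarith [mul_le_mul_of_nonneg_right hmain (by linarith : (0 : ℝ) ≤ (d : ℝ) + 1),
      mul_le_mul_of_nonneg_left hcs2 (by linarith : (0 : ℝ) ≤ (d : ℝ) - 1),
      hcs1, hS2pos, hQ0]
  exact (Real.le_sqrt' ht0).2 hfin
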